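/- Let K : X × X → ℝ be a symmetric kernel on a set X and x₁,…,xₙ ∈ X points with invertible kernel matrix Kₙ = (K(xᵢ,xⱼ)). Let ξ and μ be finitely supported signed measures on X, and for w ∈ ℝⁿ let ξ^{[w]} = ξ + Σᵢ wᵢ δ_{xᵢ}. Then E_K(ξ^{[w]} − μ) = E_K(ξ − μ) + wᵀKₙw + 2wᵀp_{K,n}(ξ − μ), where p_{K,n}(ξ−μ) = (P_{K,ξ−μ}(x₁),…,P_{K,ξ−μ}(xₙ))ᵀ; and if Kₙ is positive definite, the minimum over w ∈ ℝⁿ of E_K(ξ^{[w]} − μ) equals E_{K_{|n}}(ξ − μ), the energy of ξ − μ for the conditional kernel K_{|n}. -/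

import Mathlib

open Matrix

lemma part1_aux {X : Type*} (K : X → X → ℝ) (hSym : ∀ a b, K a b = K b a)
    (n : ℕ) (x : Fin n → X) (N : ℕ) (t : Fin N → X) (d : Fin N → ℝ) (w : Fin n → ℝ) :
    (∑ i : Fin N ⊕ Fin n, ∑ j : Fin N ⊕ Fin n,
        Sum.elim d w i * Sum.elim d w j * K (Sum.elim t x i) (Sum.elim t x j))
      = (∑ i, ∑ j, d i * d j * K (t i) (t j))
        + w ⬝ᵥ ((Matrix.of fun i j : Fin n => K (x i) (x j)) *ᵥ w)
        + 2 * (w ⬝ᵥ fun i => ∑ j, d j * K (x i) (t j)) := by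
  simp only [Fintype.sum_sum_type, Sum.elim_inl, Sum.elim_inr, Finset.sum_add_distrib]
  have hB : ∑ i : Fin N, ∑ j : Fin n, d i * w j * K (t i) (x j)
      = ∑ i : Fin n, w i * ∑ j : Fin N, d j * K (x i) (t j) := by
    rw [Finset.sum_comm]
    refine Finset.sum_congr rfl fun i _ => ?_
    rw [Finset.mul_sum]
    refine Finset.sum_congr rfl fun j _ => ?_
    rw [hSym (t j) (x i)]; ring
  have hC : ∑ i : Fin n, ∑ j : Fin N, w i * d j * K (x i) (t j)
      = ∑ i : Fin n, w i * ∑ j : Fin N, d j * K (x i) (t j) := by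
    refine Finset.sum_congr rfl fun i _ => ?_
    rw [Finset.mul_sum]
    refine Finset.sum_congr rfl fun j _ => ?_
    ring
  have hD : ∑ i : Fin n, ∑ j : Fin n, w i * w j * K (x i) (x j)
      = w ⬝ᵥ ((Matrix.of fun i j : Fin n => K (x i) (x j)) *ᵥ w) := by
    simp only [dotProduct, mulVec, Matrix.of_apply, Finset.mul_sum]
    refine Finset.sum_congr rfl fun i _ => Finset.sum_congr rfl fun j _ => ?_
    ring
  have hP : (w ⬝ᵥ fun i => ∑ j, d j * K (x i) (t j))
      = ∑ i : Fin n, w i * ∑ j : Fin N, d j * K (x i) (t j) := rfl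
  rw [hB, hC, hD, hP]; ring


lemma part2_aux {X : Type*} (K : X → X → ℝ) (hSym : ∀ a b, K a b = K b a)
    (n : ℕ) (x : Fin n → X)
    (hInv : IsUnit (Matrix.of fun i j : Fin n => K (x i) (x j)).det)
    (N : ℕ) (t : Fin N → X) (d : Fin N → ℝ)
    (hE1 : ∀ w : Fin n → ℝ,
      (∑ i : Fin N ⊕ Fin n, ∑ j : Fin N ⊕ Fin n,
        Sum.elim d w i * Sum.elim d w j * K (Sum.elim t x i) (Sum.elim t x j))
      = (∑ i, ∑ j, d i * d j * K (t i) (t j))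
        + w ⬝ᵥ ((Matrix.of fun i j : Fin n => K (x i) (x j)) *ᵥ w)
        + 2 * (w ⬝ᵥ fun i => ∑ j, d j * K (x i) (t j)))
    (hPD : (Matrix.of fun i j : Fin n => K (x i) (x j)).PosDef) :
    IsLeast (Set.range fun w : Fin n → ℝ =>
      ∑ i : Fin N ⊕ Fin n, ∑ j : Fin N ⊕ Fin n,
        Sum.elim d w i * Sum.elim d w j * K (Sum.elim t x i) (Sum.elim t x j))
      (∑ i, ∑ j, d i * d j *
        (K (t i) (t j) - (fun a => K (t i) (x a)) ⬝ᵥ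
          ((Matrix.of fun i j : Fin n => K (x i) (x j))⁻¹ *ᵥ fun a => K (t j) (x a)))) := by
  set Kn : Matrix (Fin n) (Fin n) ℝ := Matrix.of fun i j => K (x i) (x j) with hKn
  set M : Matrix (Fin N) (Fin n) ℝ := Matrix.of fun i a => K (t i) (x a) with hM
  set c : ℝ := ∑ i, ∑ j, d i * d j * K (t i) (t j) with hc
  set p : Fin n → ℝ := Mᵀ *ᵥ d with hp
  have hKnT : Knᵀ = Kn := by
    ext i j; simp [hKn, hSym (x j) (x i)]
  have hKp : ∀ v : Fin n → ℝ, Kn *ᵥ (Kn⁻¹ *ᵥ v) = v := by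
    intro v
    rw [Matrix.mulVec_mulVec, Matrix.mul_nonsing_inv _ hInv, Matrix.one_mulVec]
  -- pn = p
  have hpn : (fun i => ∑ j, d j * K (x i) (t j)) = p := by
    funext a
    simp only [hp, mulVec, dotProduct, transpose_apply, hM, Matrix.of_apply]
    exact Finset.sum_congr rfl fun j _ => by rw [hSym (x a) (t j)]; ring
  -- the minimum value equals c - p ⬝ᵥ (Kn⁻¹ *ᵥ p)
  have hterm : ∀ i j, ((fun a => K (t i) (x a)) ⬝ᵥ (Kn⁻¹ *ᵥ fun a => K (t j) (x a)))
      = (M * Kn⁻¹ * Mᵀ) i j := by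
    intro i j
    simp only [Matrix.mul_apply, dotProduct, mulVec, transpose_apply, hM, Matrix.of_apply,
      Finset.sum_mul, Finset.mul_sum]
    rw [Finset.sum_comm]
    exact Finset.sum_congr rfl fun a _ => Finset.sum_congr rfl fun b _ => by ring
  have hq : (∑ i, ∑ j, d i * d j * ((fun a => K (t i) (x a)) ⬝ᵥ
      (Kn⁻¹ *ᵥ fun a => K (t j) (x a)))) = p ⬝ᵥ (Kn⁻¹ *ᵥ p) := by
    have h1 : (∑ i, ∑ j, d i * d j * ((fun a => K (t i) (x a)) ⬝ᵥ
        (Kn⁻¹ *ᵥ fun a => K (t j) (x a)))) = d ⬝ᵥ ((M * (Kn⁻¹ * Mᵀ)) *ᵥ d) := by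
      have hB : d ⬝ᵥ ((M * (Kn⁻¹ * Mᵀ)) *ᵥ d)
          = ∑ i, ∑ j, d i * ((M * Kn⁻¹ * Mᵀ) i j * d j) := by
        rw [← Matrix.mul_assoc]
        simp only [dotProduct, mulVec, Finset.mul_sum]
      rw [hB]
      refine Finset.sum_congr rfl fun i _ => Finset.sum_congr rfl fun j _ => ?_
      rw [hterm i j]; ring
    rw [h1, hp, Matrix.mulVec_mulVec, Matrix.dotProduct_mulVec, Matrix.dotProduct_mulVec,
      Matrix.mulVec_transpose, Matrix.vecMul_vecMul]
  have hmin : (∑ i, ∑ j, d i * d j *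
      (K (t i) (t j) - (fun a => K (t i) (x a)) ⬝ᵥ (Kn⁻¹ *ᵥ fun a => K (t j) (x a))))
      = c - p ⬝ᵥ (Kn⁻¹ *ᵥ p) := by
    rw [← hq, hc]
    rw [← Finset.sum_sub_distrib]
    refine Finset.sum_congr rfl fun i _ => ?_
    rw [← Finset.sum_sub_distrib]
    exact Finset.sum_congr rfl fun j _ => by ring
  rw [hmin]
  set q : ℝ := p ⬝ᵥ (Kn⁻¹ *ᵥ p) with hqq
  constructor
  · -- achieved at w₀ = -(Kn⁻¹ *ᵥ p)
    refine ⟨-(Kn⁻¹ *ᵥ p), ?_⟩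
    beta_reduce
    rw [hE1, hpn]
    have h2 : Kn *ᵥ -(Kn⁻¹ *ᵥ p) = -p := by rw [Matrix.mulVec_neg, hKp]
    rw [h2]
    have h3 : -(Kn⁻¹ *ᵥ p) ⬝ᵥ -p = q := by
      rw [neg_dotProduct, dotProduct_neg, neg_neg, dotProduct_comm]
    have h4 : -(Kn⁻¹ *ᵥ p) ⬝ᵥ p = -q := by
      rw [neg_dotProduct, dotProduct_comm]
    rw [h3, h4]; ring
  · rintro y ⟨w, rfl⟩
    beta_reduce
    rw [hE1, hpn]
    set u : Fin n → ℝ := Kn⁻¹ *ᵥ p with hu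
    have hKu : Kn *ᵥ u = p := hKp p
    have hexp : (w + u) ⬝ᵥ (Kn *ᵥ (w + u)) = w ⬝ᵥ (Kn *ᵥ w) + 2 * (w ⬝ᵥ p) + q := by
      rw [Matrix.mulVec_add, hKu, add_dotProduct, dotProduct_add,
        dotProduct_add]
      have h5 : u ⬝ᵥ (Kn *ᵥ w) = w ⬝ᵥ p := by
        rw [Matrix.dotProduct_mulVec, ← hKnT, Matrix.vecMul_transpose, hKu,
          dotProduct_comm]
      have h6 : u ⬝ᵥ p = q := dotProduct_comm u p ▸ rfl
      rw [h5]
      have h6' : u ⬝ᵥ p = q := by rw [hqq, dotProduct_comm]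
      rw [h6']; ring
    have hnn : 0 ≤ (w + u) ⬝ᵥ (Kn *ᵥ (w + u)) := by
      have := hPD.posSemidef.dotProduct_mulVec_nonneg (w + u)
      simpa using this
    rw [hexp] at hnn
    linarith


/-- Expansion of the energy of `ξ^{[w]} - μ` where `ξ^{[w]} = ξ + Σᵢ wᵢ δ_{xᵢ}`:
`E_K(ξ^{[w]} - μ) = E_K(ξ-μ) + wᵀKₙw + 2wᵀp_{K,n}(ξ-μ)`; and if `Kₙ` is positive
definite, the minimum over `w` of `E_K(ξ^{[w]} - μ)` equals `E_{K_{|n}}(ξ-μ)`,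
the energy of `ξ-μ` for the conditional kernel. -/
theorem energy_augmented_design {X : Type*} (K : X → X → ℝ)
    (hSym : ∀ a b, K a b = K b a)
    (n : ℕ) (x : Fin n → X)
    (hInv : IsUnit (Matrix.of fun i j : Fin n => K (x i) (x j)).det)
    (N : ℕ) (t : Fin N → X) (wXi wMu : Fin N → ℝ) :
    letI Kn : Matrix (Fin n) (Fin n) ℝ := Matrix.of fun i j => K (x i) (x j)
    letI kn : X → Fin n → ℝ := fun a i => K a (x i)
    letI Kcond : X → X → ℝ := fun a b => K a b - kn a ⬝ᵥ (Kn⁻¹ *ᵥ kn b)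
    letI dlt : Fin N → ℝ := fun i => wXi i - wMu i
    letI E : (Fin n → ℝ) → ℝ := fun w =>
      ∑ i : Fin N ⊕ Fin n, ∑ j : Fin N ⊕ Fin n,
        Sum.elim dlt w i * Sum.elim dlt w j * K (Sum.elim t x i) (Sum.elim t x j)
    letI pn : Fin n → ℝ := fun i => ∑ j, dlt j * K (x i) (t j)
    (∀ w : Fin n → ℝ,
      E w = (∑ i, ∑ j, dlt i * dlt j * K (t i) (t j))
              + w ⬝ᵥ (Kn *ᵥ w) + 2 * (w ⬝ᵥ pn)) ∧
    (Kn.PosDef →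
      IsLeast (Set.range E) (∑ i, ∑ j, dlt i * dlt j * Kcond (t i) (t j))) := by
  constructor
  · intro w
    exact part1_aux K hSym n x N t (fun i => wXi i - wMu i) w
  · intro hPD
    exact part2_aux K hSym n x hInv N t (fun i => wXi i - wMu i)
      (part1_aux K hSym n x N t (fun i => wXi i - wMu i)) hPD
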